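/- Let B ⊆ A be a C-Galois extension. Then the map ψ : C ⊗ A → A ⊗ C defined by ψ(c ⊗ a) = c^{(1)}·((c^{(2)}a)_{(0)}) ⊗ (c^{(2)}a)_{(1)} = can ∘ (A ⊗_B m) ∘ (τ ⊗ A), where τ = can^{-1}(1 ⊗ −) is the translation map, is an entwining map: it satisfies ψ∘(C⊗m) = (m⊗C)∘(A⊗ψ)∘(ψ⊗A), ψ∘(C⊗η) = η⊗C, (A⊗Δ)∘ψ = (ψ⊗C)∘(C⊗ψ)∘(Δ⊗A), and (A⊗ε)∘ψ = ε⊗A. -/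

import Mathlib

open TensorProduct LinearMap Coalgebra

set_option linter.unusedSectionVars false
set_option maxHeartbeats 1000000
set_option synthInstance.maxHeartbeats 200000

variable {k A C : Type*} [Field k] [Ring A] [Algebra k A]
  [AddCommGroup C] [Module k C] [Coalgebra k C]

/-- The four axioms of an entwining structure `(A, C, ψ)`. -/
def IsEntwining (ψ : C ⊗[k] A →ₗ[k] A ⊗[k] C) : Prop :=
  (ψ ∘ₗ (LinearMap.mul' k A).lTensor C ∘ₗ (TensorProduct.assoc k C A A).toLinearMap
      = (LinearMap.mul' k A).rTensor C ∘ₗ (TensorProduct.assoc k A A C).symm.toLinearMap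
        ∘ₗ ψ.lTensor A ∘ₗ (TensorProduct.assoc k A C A).toLinearMap ∘ₗ ψ.rTensor A)
  ∧ (∀ c : C, ψ (c ⊗ₜ[k] (1 : A)) = (1 : A) ⊗ₜ[k] c)
  ∧ ((comul (R := k) (A := C)).lTensor A ∘ₗ ψ
      = (TensorProduct.assoc k A C C).toLinearMap ∘ₗ ψ.rTensor C
        ∘ₗ (TensorProduct.assoc k C A C).symm.toLinearMap ∘ₗ ψ.lTensor C
        ∘ₗ (TensorProduct.assoc k C C A).toLinearMap ∘ₗ (comul (R := k) (A := C)).rTensor A)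
  ∧ ((TensorProduct.rid k A).toLinearMap ∘ₗ (counit (R := k) (A := C)).lTensor A ∘ₗ ψ
      = (TensorProduct.lid k A).toLinearMap ∘ₗ (counit (R := k) (A := C)).rTensor A)

/-- `ρ : A → A ⊗ C` is a (counital, coassociative) right `C`-comodule structure. -/
def IsComodule (ρ : A →ₗ[k] A ⊗[k] C) : Prop :=
  ((comul (R := k) (A := C)).lTensor A ∘ₗ ρ
      = (TensorProduct.assoc k A C C).toLinearMap ∘ₗ ρ.rTensor C ∘ₗ ρ)
  ∧ ((TensorProduct.rid k A).toLinearMap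
      ∘ₗ (counit (R := k) (A := C)).lTensor A ∘ₗ ρ = LinearMap.id)

/-- The coinvariants `B = A^{co C}` of a coaction `ρ`. -/
def coinvSet (ρ : A →ₗ[k] A ⊗[k] C) : Set A :=
  {b : A | ∀ a : A, ρ (b * a) = (LinearMap.mulLeft k b).rTensor C (ρ a)}

/-- The canonical map `A ⊗ A → A ⊗ C`, `a ⊗ a' ↦ a · ρ a'`, whose factorisation
through `A ⊗_B A` is the canonical Galois map `can`. -/
noncomputable def canF (ρ : A →ₗ[k] A ⊗[k] C) : A ⊗[k] A →ₗ[k] A ⊗[k] C :=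
  (LinearMap.mul' k A).rTensor C ∘ₗ (TensorProduct.assoc k A A C).symm.toLinearMap
    ∘ₗ ρ.lTensor A

/-- The kernel of `A ⊗ A ↠ A ⊗_B A`: the subspace spanned by
`a b ⊗ a' - a ⊗ b a'` for `b ∈ B = A^{co C}`. -/
noncomputable def relJ (ρ : A →ₗ[k] A ⊗[k] C) : Submodule k (A ⊗[k] A) :=
  Submodule.span k {x : A ⊗[k] A | ∃ (a a' b : A), b ∈ coinvSet ρ
    ∧ x = (a * b) ⊗ₜ[k] a' - a ⊗ₜ[k] (b * a')}

/-- `B ⊆ A` is a `C`-Galois extension: the canonical map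
`can : A ⊗_B A → A ⊗ C` is bijective; equivalently, `canF ρ` is surjective
with kernel exactly `relJ ρ`. -/
def IsCGalois (ρ : A →ₗ[k] A ⊗[k] C) : Prop :=
  Function.Surjective (canF ρ) ∧ LinearMap.ker (canF ρ) = relJ ρ

/-- A (linear) lift of the translation map `τ = can⁻¹(1 ⊗ -) : C → A ⊗_B A`
to `A ⊗ A`. -/
def IsTranslationLift (ρ : A →ₗ[k] A ⊗[k] C) (τ : C →ₗ[k] A ⊗[k] A) : Prop :=
  ∀ c : C, canF ρ (τ c) = (1 : A) ⊗ₜ[k] c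

/-- The canonical entwining map `ψ = can ∘ (A ⊗_B m) ∘ (τ ⊗ A)` associated to a
`C`-Galois extension, expressed through a lift `τ` of the translation map:
`ψ (c ⊗ a) = c⁽¹⁾ ((c⁽²⁾ a)₍₀₎) ⊗ (c⁽²⁾ a)₍₁₎`. -/
noncomputable def canPsi (ρ : A →ₗ[k] A ⊗[k] C) (τ : C →ₗ[k] A ⊗[k] A) :
    C ⊗[k] A →ₗ[k] A ⊗[k] C :=
  canF ρ ∘ₗ (LinearMap.mul' k A).lTensor A
    ∘ₗ (TensorProduct.assoc k A A A).toLinearMap ∘ₗ τ.rTensor A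

/-- The right `A`-action `(m ⊗ C) ∘ (A ⊗ ψ)` on `A ⊗ C` induced by an entwining map. -/
noncomputable def actPsi (ψ : C ⊗[k] A →ₗ[k] A ⊗[k] C) :
    (A ⊗[k] C) ⊗[k] A →ₗ[k] A ⊗[k] C :=
  (LinearMap.mul' k A).rTensor C ∘ₗ (TensorProduct.assoc k A A C).symm.toLinearMap
    ∘ₗ ψ.lTensor A ∘ₗ (TensorProduct.assoc k A C A).toLinearMap

-- ### basic lemmas

private lemma coll_tmul {M : Type*} [AddCommGroup M] [Module k M] (u : A) (z : A ⊗[k] M) :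
    (LinearMap.mul' k A).rTensor M ((TensorProduct.assoc k A A M).symm (u ⊗ₜ[k] z))
      = (mulLeft k u).rTensor M z := by
  induction z using TensorProduct.induction_on with
  | zero => simp
  | tmul p m => simp
  | add x y hx hy => simp only [tmul_add, map_add, hx, hy]

private lemma canF_tmul (ρ : A →ₗ[k] A ⊗[k] C) (u v : A) :
    canF ρ (u ⊗ₜ[k] v) = (mulLeft k u).rTensor C (ρ v) := by
  simp [canF, coll_tmul]

private lemma canF_mulLeft (ρ : A →ₗ[k] A ⊗[k] C) (b : A) (x : A ⊗[k] A) :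
    canF ρ ((mulLeft k b).rTensor A x) = (mulLeft k b).rTensor C (canF ρ x) := by
  induction x using TensorProduct.induction_on with
  | zero => simp
  | tmul u v =>
      simp only [rTensor_tmul, mulLeft_apply, canF_tmul, mulLeft_mul, rTensor_comp,
        coe_comp, Function.comp_apply]
  | add x y hx hy => simp [map_add, hx, hy]

private lemma comm_lr (f : A →ₗ[k] A) (g : A →ₗ[k] A) (x : A ⊗[k] A) :
    f.rTensor A (g.lTensor A x) = g.lTensor A (f.rTensor A x) := by
  rw [← comp_apply, rTensor_comp_lTensor, ← lTensor_comp_rTensor, comp_apply]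

private lemma canF_one_tmul (ρ : A →ₗ[k] A ⊗[k] C) (v : A) :
    canF ρ ((1 : A) ⊗ₜ[k] v) = ρ v := by
  rw [canF_tmul, mulLeft_one, rTensor_id, LinearMap.id_apply]

private lemma canF_rel (ρ : A →ₗ[k] A ⊗[k] C) (hGal : IsCGalois ρ)
    {b : A} (hb : b ∈ coinvSet ρ) (u v : A) :
    canF ρ ((u * b) ⊗ₜ[k] v) = canF ρ (u ⊗ₜ[k] (b * v)) := by
  have hmem : (u * b) ⊗ₜ[k] v - u ⊗ₜ[k] (b * v) ∈ relJ ρ :=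
    Submodule.subset_span ⟨u, v, b, hb, rfl⟩
  rw [← hGal.2, mem_ker, map_sub, sub_eq_zero] at hmem
  exact hmem

private lemma relJ_ra (ρ : A →ₗ[k] A ⊗[k] C) (a : A) {x : A ⊗[k] A} (hx : x ∈ relJ ρ) :
    (mulRight k a).lTensor A x ∈ relJ ρ := by
  refine Submodule.span_induction ?_ (by simp) ?_ ?_ hx
  · rintro x ⟨u, v, b, hb, rfl⟩
    refine Submodule.subset_span ⟨u, v * a, b, hb, ?_⟩
    simp [tmul_sub, mul_assoc]
  · intro x y _ _ hx hy
    rw [map_add]; exact Submodule.add_mem _ hx hy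
  · intro r x _ hx
    rw [map_smul]; exact Submodule.smul_mem _ r hx

private lemma canF_ra_relJ (ρ : A →ₗ[k] A ⊗[k] C) (hGal : IsCGalois ρ)
    (a : A) {x : A ⊗[k] A} (hx : x ∈ relJ ρ) :
    canF ρ ((mulRight k a).lTensor A x) = 0 := by
  have := relJ_ra ρ a hx
  rw [← hGal.2, mem_ker] at this
  exact this

private lemma mm_eq (a : A) (x : A ⊗[k] A) :
    (LinearMap.mul' k A).lTensor A ((TensorProduct.assoc k A A A) (x ⊗ₜ[k] a))
      = (mulRight k a).lTensor A x := by
  induction x using TensorProduct.induction_on with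
  | zero => rw [zero_tmul, map_zero, map_zero, map_zero]
  | tmul u v => simp
  | add x y hx hy => simp only [add_tmul, map_add, hx, hy]

private lemma psi_tmul (ρ : A →ₗ[k] A ⊗[k] C) (τ : C →ₗ[k] A ⊗[k] A) (c : C) (a : A) :
    canPsi ρ τ (c ⊗ₜ[k] a) = canF ρ ((mulRight k a).lTensor A (τ c)) := by
  simp only [canPsi, coe_comp, Function.comp_apply, LinearEquiv.coe_coe, rTensor_tmul]
  rw [mm_eq]

-- ### the translation map lemmas

private noncomputable def Lam (τ : C →ₗ[k] A ⊗[k] A) : A ⊗[k] C →ₗ[k] A ⊗[k] A :=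
  (LinearMap.mul' k A).rTensor A ∘ₗ (TensorProduct.assoc k A A A).symm.toLinearMap
    ∘ₗ τ.lTensor A

private lemma Lam_tmul (τ : C →ₗ[k] A ⊗[k] A) (u : A) (c : C) :
    Lam τ (u ⊗ₜ[k] c) = (mulLeft k u).rTensor A (τ c) := by
  simp only [Lam, coe_comp, Function.comp_apply, LinearEquiv.coe_coe, lTensor_tmul]
  exact coll_tmul u (τ c)

private lemma canF_Lam (ρ : A →ₗ[k] A ⊗[k] C) (τ : C →ₗ[k] A ⊗[k] A)
    (hτ : IsTranslationLift ρ τ) (w : A ⊗[k] C) :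
    canF ρ (Lam τ w) = w := by
  induction w using TensorProduct.induction_on with
  | zero => simp
  | tmul u c => rw [Lam_tmul, canF_mulLeft, hτ, rTensor_tmul, mulLeft_apply, mul_one]
  | add x y hx hy => rw [map_add, map_add, hx, hy]

private lemma Lam_rho_sub_mem (ρ : A →ₗ[k] A ⊗[k] C) (τ : C →ₗ[k] A ⊗[k] A)
    (hGal : IsCGalois ρ) (hτ : IsTranslationLift ρ τ) (v : A) :
    Lam τ (ρ v) - (1 : A) ⊗ₜ[k] v ∈ relJ ρ := by
  rw [← hGal.2, mem_ker, map_sub, canF_Lam ρ τ hτ, canF_one_tmul, sub_self]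

-- ### the map `Pa`

private noncomputable def Pa (ρ : A →ₗ[k] A ⊗[k] C) (τ : C →ₗ[k] A ⊗[k] A) (a : A) :
    A ⊗[k] C →ₗ[k] A ⊗[k] C :=
  (LinearMap.mul' k A).rTensor C ∘ₗ (TensorProduct.assoc k A A C).symm.toLinearMap
    ∘ₗ ((canPsi ρ τ) ∘ₗ (TensorProduct.mk k C A).flip a).lTensor A

private lemma Pa_tmul (ρ : A →ₗ[k] A ⊗[k] C) (τ : C →ₗ[k] A ⊗[k] A) (a u : A) (c : C) :
    Pa ρ τ a (u ⊗ₜ[k] c) = (mulLeft k u).rTensor C (canPsi ρ τ (c ⊗ₜ[k] a)) := by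
  simp only [Pa, coe_comp, Function.comp_apply, LinearEquiv.coe_coe, lTensor_tmul,
    flip_apply, TensorProduct.mk_apply]
  exact coll_tmul u _

private lemma Pa_mulLeft (ρ : A →ₗ[k] A ⊗[k] C) (τ : C →ₗ[k] A ⊗[k] A) (a b : A)
    (w : A ⊗[k] C) :
    Pa ρ τ a ((mulLeft k b).rTensor C w) = (mulLeft k b).rTensor C (Pa ρ τ a w) := by
  induction w using TensorProduct.induction_on with
  | zero => simp
  | tmul u c =>
      simp only [rTensor_tmul, mulLeft_apply, Pa_tmul, mulLeft_mul, rTensor_comp,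
        coe_comp, Function.comp_apply]
  | add x y hx hy => simp only [map_add, hx, hy]

private lemma Pa_eq_can (ρ : A →ₗ[k] A ⊗[k] C) (τ : C →ₗ[k] A ⊗[k] A) (a : A)
    (w : A ⊗[k] C) :
    Pa ρ τ a w = canF ρ ((mulRight k a).lTensor A (Lam τ w)) := by
  induction w using TensorProduct.induction_on with
  | zero => simp
  | tmul u c =>
      rw [Pa_tmul, psi_tmul, ← canF_mulLeft, comm_lr, Lam_tmul]
  | add x y hx hy => rw [map_add, map_add, map_add, map_add, hx, hy]

private lemma Pa_rho (ρ : A →ₗ[k] A ⊗[k] C) (τ : C →ₗ[k] A ⊗[k] A)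
    (hGal : IsCGalois ρ) (hτ : IsTranslationLift ρ τ) (a v : A) :
    Pa ρ τ a (ρ v) = ρ (v * a) := by
  rw [Pa_eq_can]
  have h : Lam τ (ρ v) = (1 : A) ⊗ₜ[k] v + (Lam τ (ρ v) - (1:A) ⊗ₜ[k] v) := by abel
  rw [h, map_add, map_add, canF_ra_relJ ρ hGal a (Lam_rho_sub_mem ρ τ hGal hτ v), add_zero,
    lTensor_tmul, mulRight_apply, canF_one_tmul]

private lemma Pa_can (ρ : A →ₗ[k] A ⊗[k] C) (τ : C →ₗ[k] A ⊗[k] A)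
    (hGal : IsCGalois ρ) (hτ : IsTranslationLift ρ τ) (a : A) (x : A ⊗[k] A) :
    Pa ρ τ a (canF ρ x) = canF ρ ((mulRight k a).lTensor A x) := by
  induction x using TensorProduct.induction_on with
  | zero => simp
  | tmul u v =>
      rw [canF_tmul, Pa_mulLeft, Pa_rho ρ τ hGal hτ, lTensor_tmul, mulRight_apply,
        canF_tmul]
  | add x y hx hy => rw [map_add, map_add, map_add, map_add, hx, hy]

private lemma act_eq_Pa (ρ : A →ₗ[k] A ⊗[k] C) (τ : C →ₗ[k] A ⊗[k] A)
    (a' : A) (w : A ⊗[k] C) :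
    (LinearMap.mul' k A).rTensor C ((TensorProduct.assoc k A A C).symm
      ((canPsi ρ τ).lTensor A ((TensorProduct.assoc k A C A) (w ⊗ₜ[k] a'))))
      = Pa ρ τ a' w := by
  induction w using TensorProduct.induction_on with
  | zero => rw [zero_tmul, map_zero, map_zero, map_zero, map_zero, map_zero]
  | tmul u c =>
      rw [TensorProduct.assoc_tmul, lTensor_tmul, coll_tmul, Pa_tmul]
  | add x y hx hy =>
      rw [add_tmul, map_add, map_add, map_add, map_add, map_add, hx, hy]

-- ### axioms 1, 2, 4

private lemma axiom1 (ρ : A →ₗ[k] A ⊗[k] C) (τ : C →ₗ[k] A ⊗[k] A)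
    (hGal : IsCGalois ρ) (hτ : IsTranslationLift ρ τ) :
    (canPsi ρ τ) ∘ₗ (LinearMap.mul' k A).lTensor C
        ∘ₗ (TensorProduct.assoc k C A A).toLinearMap
      = (LinearMap.mul' k A).rTensor C ∘ₗ (TensorProduct.assoc k A A C).symm.toLinearMap
        ∘ₗ (canPsi ρ τ).lTensor A ∘ₗ (TensorProduct.assoc k A C A).toLinearMap
        ∘ₗ (canPsi ρ τ).rTensor A := by
  apply TensorProduct.ext'
  intro x a'
  induction x using TensorProduct.induction_on with
  | zero => rw [zero_tmul, map_zero, map_zero]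
  | tmul c a =>
      simp only [coe_comp, Function.comp_apply, LinearEquiv.coe_coe,
        TensorProduct.assoc_tmul, lTensor_tmul, mul'_apply, rTensor_tmul]
      rw [act_eq_Pa, psi_tmul ρ τ c a, Pa_can ρ τ hGal hτ, psi_tmul ρ τ c (a * a'),
        ← comp_apply ((mulRight k a').lTensor A), ← lTensor_comp, ← mulRight_mul]
  | add x y hx hy => rw [add_tmul, map_add, map_add, hx, hy]

private lemma axiom2 (ρ : A →ₗ[k] A ⊗[k] C) (τ : C →ₗ[k] A ⊗[k] A)
    (hτ : IsTranslationLift ρ τ) (c : C) :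
    canPsi ρ τ (c ⊗ₜ[k] (1 : A)) = (1 : A) ⊗ₜ[k] c := by
  rw [psi_tmul, mulRight_one, lTensor_id, LinearMap.id_apply, hτ]

private lemma E1 (u : A) (w : A ⊗[k] C) :
    (TensorProduct.rid k A) ((counit (R := k) (A := C)).lTensor A
        ((mulLeft k u).rTensor C w))
      = u * (TensorProduct.rid k A) ((counit (R := k) (A := C)).lTensor A w) := by
  induction w using TensorProduct.induction_on with
  | zero => simp
  | tmul p c => simp [mul_smul_comm]
  | add x y hx hy => simp only [map_add, hx, hy, mul_add]

private lemma rid_counit_canF (ρ : A →ₗ[k] A ⊗[k] C) (hρ : IsComodule ρ) (x : A ⊗[k] A) :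
    (TensorProduct.rid k A) ((counit (R := k) (A := C)).lTensor A (canF ρ x))
      = LinearMap.mul' k A x := by
  induction x using TensorProduct.induction_on with
  | zero => simp
  | tmul u v =>
      rw [canF_tmul, E1, mul'_apply]
      have h2 := LinearMap.congr_fun hρ.2 v
      simp only [coe_comp, Function.comp_apply, LinearEquiv.coe_coe, id_coe, id_eq] at h2
      rw [h2]
  | add x y hx hy => simp only [map_add, hx, hy]

private lemma mul'_lT (a : A) (x : A ⊗[k] A) :
    LinearMap.mul' k A ((mulRight k a).lTensor A x) = LinearMap.mul' k A x * a := by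
  induction x using TensorProduct.induction_on with
  | zero => simp
  | tmul u v => simp [mul_assoc]
  | add x y hx hy => simp only [map_add, hx, hy, add_mul]

private lemma axiom4 (ρ : A →ₗ[k] A ⊗[k] C) (τ : C →ₗ[k] A ⊗[k] A)
    (hρ : IsComodule ρ) (hτ : IsTranslationLift ρ τ) :
    (TensorProduct.rid k A).toLinearMap ∘ₗ (counit (R := k) (A := C)).lTensor A
        ∘ₗ (canPsi ρ τ)
      = (TensorProduct.lid k A).toLinearMap ∘ₗ (counit (R := k) (A := C)).rTensor A := by
  apply TensorProduct.ext'
  intro c a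
  simp only [coe_comp, Function.comp_apply, LinearEquiv.coe_coe, rTensor_tmul,
    TensorProduct.lid_tmul]
  rw [psi_tmul, rid_counit_canF ρ hρ, mul'_lT]
  have hτc : LinearMap.mul' k A (τ c)
      = (counit (R := k) (A := C)) c • (1 : A) := by
    have := rid_counit_canF ρ hρ (τ c)
    rw [hτ c] at this
    simp only [lTensor_tmul, TensorProduct.rid_tmul] at this
    exact this.symm
  rw [hτc, smul_mul_assoc, one_mul]

-- ### axiom 3 machinery

private lemma mapComm {M N P Q : Type*} [AddCommGroup M] [Module k M] [AddCommGroup N]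
    [Module k N] [AddCommGroup P] [Module k P] [AddCommGroup Q] [Module k Q]
    (f : M →ₗ[k] N) (g : P →ₗ[k] Q) (x : M ⊗[k] P) :
    g.lTensor N (f.rTensor P x) = f.rTensor Q (g.lTensor M x) := by
  rw [← comp_apply, lTensor_comp_rTensor, ← rTensor_comp_lTensor, comp_apply]

private lemma K1 (ρ : A →ₗ[k] A ⊗[k] C) (a : A) (w : A ⊗[k] C) :
    (canF ρ).rTensor C ((TensorProduct.assoc k A A C).symm (a ⊗ₜ[k] w))
      = ((mulLeft k a).rTensor C ∘ₗ ρ).rTensor C w := by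
  induction w using TensorProduct.induction_on with
  | zero => simp
  | tmul u c => simp [canF_tmul]
  | add x y hx hy => simp only [tmul_add, map_add, hx, hy]

private lemma K2 (f : A →ₗ[k] A) (w : A ⊗[k] (C ⊗[k] C)) :
    (TensorProduct.assoc k A C C).symm (f.rTensor (C ⊗[k] C) w)
      = (f.rTensor C).rTensor C ((TensorProduct.assoc k A C C).symm w) := by
  induction w using TensorProduct.induction_on with
  | zero => simp
  | tmul u d =>
      induction d using TensorProduct.induction_on with
      | zero => simp
      | tmul c c' => simp
      | add x y hx hy => simp only [tmul_add, map_add, hx, hy]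
  | add x y hx hy => simp only [map_add, hx, hy]

private lemma Kmain (ρ : A →ₗ[k] A ⊗[k] C) (hρ : IsComodule ρ) (x : A ⊗[k] A) :
    (TensorProduct.assoc k A C C).symm
        ((comul (R := k) (A := C)).lTensor A (canF ρ x))
      = (canF ρ).rTensor C ((TensorProduct.assoc k A A C).symm (ρ.lTensor A x)) := by
  induction x using TensorProduct.induction_on with
  | zero => simp
  | tmul a v =>
      have h1 := LinearMap.congr_fun hρ.1 v
      simp only [coe_comp, Function.comp_apply, LinearEquiv.coe_coe] at h1
      rw [canF_tmul, mapComm, h1, K2, LinearEquiv.symm_apply_apply, lTensor_tmul, K1,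
        rTensor_comp, comp_apply]
  | add x y hx hy => simp only [map_add, hx, hy]

private lemma L16 (ρ : A →ₗ[k] A ⊗[k] C) (τ : C →ₗ[k] A ⊗[k] A)
    (hτ : IsTranslationLift ρ τ) (d : C ⊗[k] C) :
    (canF ρ).rTensor C (τ.rTensor C d)
      = (TensorProduct.assoc k A C C).symm ((1 : A) ⊗ₜ[k] d) := by
  induction d using TensorProduct.induction_on with
  | zero => simp
  | tmul c₁ c₂ => simp [hτ c₁]
  | add x y hx hy => simp only [tmul_add, map_add, hx, hy]

private lemma kappa_ker (ρ : A →ₗ[k] A ⊗[k] C) (τ : C →ₗ[k] A ⊗[k] A)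
    (hρ : IsComodule ρ) (hτ : IsTranslationLift ρ τ) (c : C) :
    (canF ρ).rTensor C ((TensorProduct.assoc k A A C).symm (ρ.lTensor A (τ c))
        - τ.rTensor C (comul (R := k) (A := C) c)) = 0 := by
  rw [map_sub, ← Kmain ρ hρ, hτ c, lTensor_tmul, L16 ρ τ hτ, sub_self]

private noncomputable def Hm (ρ : A →ₗ[k] A ⊗[k] C) (τ : C →ₗ[k] A ⊗[k] A) (a : A) :
    (A ⊗[k] A) ⊗[k] C →ₗ[k] (A ⊗[k] A) ⊗[k] C :=
  (TensorProduct.assoc k A A C).symm.toLinearMap ∘ₗ (Pa ρ τ a).lTensor A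
    ∘ₗ (TensorProduct.assoc k A A C).toLinearMap

private lemma Hm_tmul (ρ : A →ₗ[k] A ⊗[k] C) (τ : C →ₗ[k] A ⊗[k] A) (a u v : A) (c : C) :
    Hm ρ τ a ((u ⊗ₜ[k] v) ⊗ₜ[k] c)
      = (TensorProduct.assoc k A A C).symm (u ⊗ₜ[k] Pa ρ τ a (v ⊗ₜ[k] c)) := by
  simp [Hm]

private lemma HG (ρ : A →ₗ[k] A ⊗[k] C) (τ : C →ₗ[k] A ⊗[k] A)
    (hGal : IsCGalois ρ) (hτ : IsTranslationLift ρ τ) (a : A) (x : A ⊗[k] A) :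
    (TensorProduct.assoc k A A C).symm (ρ.lTensor A ((mulRight k a).lTensor A x))
      = Hm ρ τ a ((TensorProduct.assoc k A A C).symm (ρ.lTensor A x)) := by
  induction x using TensorProduct.induction_on with
  | zero => simp
  | tmul u v =>
      simp only [lTensor_tmul, mulRight_apply, Hm, coe_comp, Function.comp_apply,
        LinearEquiv.coe_coe, LinearEquiv.apply_symm_apply]
      rw [← Pa_rho ρ τ hGal hτ a v]
  | add x y hx hy => simp only [map_add, hx, hy]

private lemma relc (ρ : A →ₗ[k] A ⊗[k] C) (hGal : IsCGalois ρ)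
    {b : A} (hb : b ∈ coinvSet ρ) (u : A) (z : A ⊗[k] C) :
    (canF ρ).rTensor C ((TensorProduct.assoc k A A C).symm ((u * b) ⊗ₜ[k] z))
      = (canF ρ).rTensor C ((TensorProduct.assoc k A A C).symm
          (u ⊗ₜ[k] (mulLeft k b).rTensor C z)) := by
  induction z using TensorProduct.induction_on with
  | zero => simp
  | tmul p c => simp [canF_rel ρ hGal hb u p]
  | add x y hx hy => simp only [tmul_add, map_add, hx, hy]

private lemma Hkill_rel (ρ : A →ₗ[k] A ⊗[k] C) (τ : C →ₗ[k] A ⊗[k] A)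
    (hGal : IsCGalois ρ) (a : A) (c : C) {x : A ⊗[k] A} (hx : x ∈ relJ ρ) :
    (canF ρ).rTensor C (Hm ρ τ a (x ⊗ₜ[k] c)) = 0 := by
  have hle : relJ ρ ≤ ker ((canF ρ).rTensor C ∘ₗ Hm ρ τ a
      ∘ₗ ((TensorProduct.mk k (A ⊗[k] A) C).flip c)) := by
    rw [relJ, Submodule.span_le]
    rintro _ ⟨u, v, b, hb, rfl⟩
    simp only [SetLike.mem_coe, mem_ker, coe_comp, Function.comp_apply, flip_apply,
      TensorProduct.mk_apply, map_sub]
    rw [Hm_tmul, Hm_tmul, Pa_tmul ρ τ a (b * v) c, mulLeft_mul, rTensor_comp, comp_apply,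
      ← Pa_tmul ρ τ a v c, relc ρ hGal hb u (Pa ρ τ a (v ⊗ₜ[k] c)), sub_self]
  have h := hle hx
  simpa using h

private lemma Hkill_ker (ρ : A →ₗ[k] A ⊗[k] C) (τ : C →ₗ[k] A ⊗[k] A)
    (hGal : IsCGalois ρ) (a : A) {y : (A ⊗[k] A) ⊗[k] C}
    (hy : y ∈ ker ((canF ρ).rTensor C)) :
    (canF ρ).rTensor C (Hm ρ τ a y) = 0 := by
  have hex : Function.Exact (((ker (canF ρ)).subtype).rTensor C) ((canF ρ).rTensor C) :=
    rTensor_exact C (LinearMap.exact_subtype_ker_map (canF ρ)) hGal.1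
  rw [hex.linearMap_ker_eq] at hy
  obtain ⟨ξ, rfl⟩ := hy
  have hz : ((canF ρ).rTensor C ∘ₗ Hm ρ τ a ∘ₗ ((ker (canF ρ)).subtype).rTensor C) = 0 := by
    apply TensorProduct.ext'
    intro j c
    simp only [coe_comp, Function.comp_apply, rTensor_tmul, Submodule.coe_subtype,
      LinearMap.zero_apply]
    exact Hkill_rel ρ τ hGal a c (hGal.2 ▸ j.2)
  have := LinearMap.congr_fun hz ξ
  simpa using this

private noncomputable def Xi1 (ρ : A →ₗ[k] A ⊗[k] C) :
    (A ⊗[k] A) ⊗[k] (A ⊗[k] C) →ₗ[k] (A ⊗[k] C) ⊗[k] C :=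
  (canF ρ).rTensor C ∘ₗ (TensorProduct.assoc k A A C).symm.toLinearMap
    ∘ₗ ((LinearMap.mul' k A).rTensor C
        ∘ₗ (TensorProduct.assoc k A A C).symm.toLinearMap).lTensor A
    ∘ₗ (TensorProduct.assoc k A A (A ⊗[k] C)).toLinearMap

private noncomputable def Xi2 (ρ : A →ₗ[k] A ⊗[k] C) :
    (A ⊗[k] A) ⊗[k] (A ⊗[k] C) →ₗ[k] (A ⊗[k] C) ⊗[k] C :=
  ((canF ρ) ∘ₗ (LinearMap.mul' k A).lTensor A
      ∘ₗ (TensorProduct.assoc k A A A).toLinearMap).rTensor C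
    ∘ₗ (TensorProduct.assoc k (A ⊗[k] A) A C).symm.toLinearMap

private lemma Xieq (ρ : A →ₗ[k] A ⊗[k] C) : Xi1 ρ = Xi2 (k := k) ρ := by
  apply TensorProduct.ext'
  intro x w
  induction x using TensorProduct.induction_on with
  | zero => rw [zero_tmul, map_zero, map_zero]
  | tmul u v =>
      induction w using TensorProduct.induction_on with
      | zero => rw [tmul_zero, map_zero, map_zero]
      | tmul p q =>
          simp [Xi1, Xi2]
      | add x y hx hy => rw [tmul_add, map_add, map_add, hx, hy]
  | add x y hx hy => rw [add_tmul, map_add, map_add, hx, hy]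

private lemma plugA (ρ : A →ₗ[k] A ⊗[k] C) (τ : C →ₗ[k] A ⊗[k] A) (a : A)
    (x : A ⊗[k] A) (c₂ : C) :
    (canF ρ).rTensor C (Hm ρ τ a (x ⊗ₜ[k] c₂))
      = Xi1 ρ (x ⊗ₜ[k] (canPsi ρ τ (c₂ ⊗ₜ[k] a))) := by
  induction x using TensorProduct.induction_on with
  | zero => rw [zero_tmul, map_zero, map_zero, zero_tmul, map_zero]
  | tmul u v =>
      simp [Hm, Pa, Xi1]
  | add x y hx hy => rw [add_tmul, map_add, map_add, add_tmul, map_add, hx, hy]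

private lemma plugB (ρ : A →ₗ[k] A ⊗[k] C) (τ : C →ₗ[k] A ⊗[k] A) (c₁ : C)
    (w : A ⊗[k] C) :
    (canPsi ρ τ).rTensor C ((TensorProduct.assoc k C A C).symm (c₁ ⊗ₜ[k] w))
      = Xi2 ρ (τ c₁ ⊗ₜ[k] w) := by
  induction w using TensorProduct.induction_on with
  | zero => rw [tmul_zero, map_zero, map_zero, tmul_zero, map_zero]
  | tmul p q =>
      simp only [Xi2, coe_comp, Function.comp_apply, LinearEquiv.coe_coe,
        TensorProduct.assoc_symm_tmul, rTensor_tmul]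
      rw [mm_eq, ← psi_tmul]
  | add x y hx hy => rw [tmul_add, map_add, map_add, tmul_add, map_add, hx, hy]

private lemma threeE (ρ : A →ₗ[k] A ⊗[k] C) (τ : C →ₗ[k] A ⊗[k] A) (a : A)
    (d : C ⊗[k] C) :
    (canF ρ).rTensor C (Hm ρ τ a (τ.rTensor C d))
      = (canPsi ρ τ).rTensor C ((TensorProduct.assoc k C A C).symm
          ((canPsi ρ τ).lTensor C ((TensorProduct.assoc k C C A) (d ⊗ₜ[k] a)))) := by
  induction d using TensorProduct.induction_on with
  | zero => rw [map_zero, map_zero, map_zero, zero_tmul, map_zero, map_zero, map_zero,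
      map_zero]
  | tmul c₁ c₂ =>
      rw [rTensor_tmul, plugA, Xieq, TensorProduct.assoc_tmul, lTensor_tmul, plugB]
  | add x y hx hy => rw [map_add, map_add, map_add, add_tmul, map_add, map_add, map_add,
      map_add, hx, hy]

private lemma axiom3 (ρ : A →ₗ[k] A ⊗[k] C) (τ : C →ₗ[k] A ⊗[k] A)
    (hρ : IsComodule ρ) (hGal : IsCGalois ρ) (hτ : IsTranslationLift ρ τ) :
    (comul (R := k) (A := C)).lTensor A ∘ₗ (canPsi ρ τ)
      = (TensorProduct.assoc k A C C).toLinearMap ∘ₗ (canPsi ρ τ).rTensor C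
        ∘ₗ (TensorProduct.assoc k C A C).symm.toLinearMap ∘ₗ (canPsi ρ τ).lTensor C
        ∘ₗ (TensorProduct.assoc k C C A).toLinearMap
        ∘ₗ (comul (R := k) (A := C)).rTensor A := by
  apply TensorProduct.ext'
  intro c a
  simp only [coe_comp, Function.comp_apply, LinearEquiv.coe_coe, rTensor_tmul]
  rw [psi_tmul]
  have hK := Kmain ρ hρ ((mulRight k a).lTensor A (τ c))
  have hK' := (LinearEquiv.symm_apply_eq _).mp hK
  rw [hK', HG ρ τ hGal hτ]
  have hκ : (TensorProduct.assoc k A A C).symm (ρ.lTensor A (τ c))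
      = τ.rTensor C (comul (R := k) (A := C) c)
        + ((TensorProduct.assoc k A A C).symm (ρ.lTensor A (τ c))
            - τ.rTensor C (comul (R := k) (A := C) c)) := by abel
  rw [hκ, map_add, map_add]
  have h0 : (canF ρ).rTensor C (Hm ρ τ a
      ((TensorProduct.assoc k A A C).symm (ρ.lTensor A (τ c))
        - τ.rTensor C (comul (R := k) (A := C) c))) = 0 :=
    Hkill_ker ρ τ hGal a (by rw [mem_ker]; exact kappa_ker ρ τ hρ hτ c)
  rw [h0, add_zero, threeE]

/-- the canonical map `ψ = can ∘ (A ⊗_B m) ∘ (τ ⊗ A)` of a `C`-Galois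
extension is an entwining map. -/
theorem canPsi_isEntwining (ρ : A →ₗ[k] A ⊗[k] C)
    (hρ : IsComodule ρ) (hGal : IsCGalois ρ)
    (τ : C →ₗ[k] A ⊗[k] A) (hτ : IsTranslationLift ρ τ) :
    IsEntwining (canPsi ρ τ) :=
  ⟨axiom1 ρ τ hGal hτ, fun c => axiom2 ρ τ hτ c, axiom3 ρ τ hρ hGal hτ, axiom4 ρ τ hρ hτ⟩
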